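/- For n ≥ 1, let P(n; u₁,…,u_{2n}) be the 2n × 2n matrix whose (k,ν) entry is u_ν^{e_k}, where (e_1, e_2, …, e_{2n}) = (3n−2, 3n−4, 3n−8, 3n−10, …, −3n+4, −3n+2) are the integers in [−3n+2, 3n−2] congruent to 3n−2 or 3n−4 modulo 6, listed decreasingly. Then det P(n; u₁,…,u_{2n−1}, a·u_{2n−1}) = (−1)ⁿ σ(a) · ∏_{μ=1}^{2n−2} σ(u_μ³ u_{2n−1}^{−3}) · det P(n−1; u₁,…,u_{2n−2}), where a = exp(iπ/3) and σ(x) = x − x⁻¹. -/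

import Mathlib

noncomputable def sig (x : ℂ) : ℂ := x - x⁻¹

noncomputable def aC : ℂ := Complex.exp (Complex.I * Real.pi / 3)

/-- The exponent sequence (3n−2, 3n−4, 3n−8, 3n−10, …, −3n+4, −3n+2),
0-indexed by j: for j even the exponent is 3n−2−3j, for j odd it is 3n−1−3j. -/
def expP (n j : ℕ) : ℤ :=
  if j % 2 = 0 then 3 * (n : ℤ) - 2 - 3 * j else 3 * (n : ℤ) - 1 - 3 * j

open Matrix Finset


lemma aC_ne : aC ≠ 0 := Complex.exp_ne_zero _
lemma aC_cube : aC ^ 3 = -1 := by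
  rw [aC, ← Complex.exp_nat_mul]
  rw [show ((3:ℕ):ℂ) * (Complex.I * Real.pi / 3) = Real.pi * Complex.I by push_cast; ring]
  exact Complex.exp_pi_mul_I
lemma aC_six : aC ^ 6 = 1 := by
  rw [show (6:ℕ) = 3*2 from rfl, pow_mul, aC_cube]; norm_num

section
variable (m : ℕ) (u : ℕ → ℂ)

noncomputable def P11 : Matrix (Fin (2*m+2)) (Fin (2*m+2)) ℂ :=
  .of fun k ν => u ν ^ expP (m+2) (k:ℕ)
noncomputable def P12 : Matrix (Fin (2*m+2)) (Fin 2) ℂ :=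
  .of fun k i => u (2*m+2+(i:ℕ)) ^ expP (m+2) (k:ℕ)
noncomputable def P21 : Matrix (Fin 2) (Fin (2*m+2)) ℂ :=
  .of fun i ν => u ν ^ expP (m+2) (2*m+2+(i:ℕ))
noncomputable def P22 : Matrix (Fin 2) (Fin 2) ℂ :=
  .of fun i j => u (2*m+2+(j:ℕ)) ^ expP (m+2) (2*m+2+(i:ℕ))
noncomputable def L1 : Matrix (Fin (2*m+2)) (Fin (2*m+2)) ℂ :=
  .of fun k j => (if j = k then 1 else 0) + (if (j:ℕ) = (k:ℕ)+2 then -(u (2*m+2))^6 else 0)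
noncomputable def L2 : Matrix (Fin (2*m+2)) (Fin 2) ℂ :=
  .of fun k i => if (k:ℕ)+2 = 2*m+2+(i:ℕ) then -(u (2*m+2))^6 else 0
noncomputable def Xmat : Matrix (Fin (2*m+2)) (Fin (2*m+2)) ℂ :=
  .of fun k ν => u ν ^ expP (m+2) (k:ℕ) - (u (2*m+2))^6 * u ν ^ expP (m+2) ((k:ℕ)+2)

lemma split_det :
    (Matrix.of fun k ν : Fin (2*m+4) => u (ν:ℕ) ^ expP (m+2) (k:ℕ)).det
      = (fromBlocks (P11 m u) (P12 m u) (P21 m u) (P22 m u)).det := by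
  rw [← det_submatrix_equiv_self
    (finSumFinEquiv : Fin (2*m+2) ⊕ Fin 2 ≃ Fin (2*m+4))]
  congr 1
  ext i j
  cases i <;> cases j <;>
    simp [P11, P12, P21, P22, fromBlocks, finSumFinEquiv_apply_left,
      finSumFinEquiv_apply_right]

lemma rowop (w : ℂ) (k : Fin (2*m+2)) :
    (∑ j : Fin (2*m+2), L1 m u k j * w ^ expP (m+2) (j:ℕ))
    + (∑ i : Fin 2, L2 m u k i * w ^ expP (m+2) (2*m+2+(i:ℕ)))
    = w ^ expP (m+2) (k:ℕ) - (u (2*m+2))^6 * w ^ expP (m+2) ((k:ℕ)+2) := by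
  have h1 : (∑ j : Fin (2*m+2), L1 m u k j * w ^ expP (m+2) (j:ℕ))
      = w ^ expP (m+2) (k:ℕ)
        + ∑ j : Fin (2*m+2),
            (if (j:ℕ) = (k:ℕ)+2 then -(u (2*m+2))^6 else 0) * w ^ expP (m+2) (j:ℕ) := by
    simp only [L1, of_apply, add_mul]
    rw [Finset.sum_add_distrib]
    congr 1
    simp [ite_mul]
  rw [h1]
  rcases lt_or_ge (k:ℕ) (2*m) with hk | hk
  · have h2 : ∑ j : Fin (2*m+2),
        (if (j:ℕ) = (k:ℕ)+2 then -(u (2*m+2))^6 else 0) * w ^ expP (m+2) (j:ℕ)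
        = -(u (2*m+2))^6 * w ^ expP (m+2) ((k:ℕ)+2) := by
      rw [Finset.sum_eq_single (⟨(k:ℕ)+2, by omega⟩ : Fin (2*m+2))]
      · simp
      · intro j _ hj
        rw [if_neg, zero_mul]
        exact fun hh => hj (Fin.ext hh)
      · simp
    have h3 : ∑ i : Fin 2, L2 m u k i * w ^ expP (m+2) (2*m+2+(i:ℕ)) = 0 := by
      apply Finset.sum_eq_zero; intro i _
      simp only [L2, of_apply]
      rw [if_neg (by omega), zero_mul]
    rw [h2, h3]; ring
  · have h2 : ∑ j : Fin (2*m+2),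
        (if (j:ℕ) = (k:ℕ)+2 then -(u (2*m+2))^6 else 0) * w ^ expP (m+2) (j:ℕ) = 0 := by
      apply Finset.sum_eq_zero; intro j _
      rw [if_neg (by omega), zero_mul]
    have h3 : ∑ i : Fin 2, L2 m u k i * w ^ expP (m+2) (2*m+2+(i:ℕ))
        = -(u (2*m+2))^6 * w ^ expP (m+2) ((k:ℕ)+2) := by
      rw [Fin.sum_univ_two]
      simp only [L2, of_apply, Fin.val_zero, Fin.val_one]
      rcases (by omega : (k:ℕ) = 2*m ∨ (k:ℕ) = 2*m+1) with h | h
      · rw [if_pos (by omega), if_neg (by omega), zero_mul, add_zero, h]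
      · rw [if_neg (by omega), if_pos (by omega), zero_mul, zero_add, h]
    rw [h2, h3]; ring

lemma detL : (fromBlocks (L1 m u) (L2 m u)
    (0 : Matrix (Fin 2) (Fin (2*m+2)) ℂ) (1 : Matrix (Fin 2) (Fin 2) ℂ)).det = 1 := by
  rw [det_fromBlocks_zero₂₁, det_one, mul_one]
  rw [Matrix.det_of_upperTriangular (M := L1 m u)]
  · apply Finset.prod_eq_one
    intro i _
    simp [L1, Fin.ext_iff]
  · intro i j h
    have hj : (j:ℕ) < (i:ℕ) := h
    simp only [L1, of_apply, Fin.ext_iff]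
    rw [if_neg (by omega), if_neg (by omega), add_zero]

lemma expP_add_two (n k : ℕ) : expP n (k+2) = expP n k - 6 := by
  unfold expP
  have h : (k+2) % 2 = k % 2 := by omega
  rw [h]; split <;> push_cast <;> ring

lemma expP_sub (k : ℕ) : expP (m+2) k = expP (m+1) k + 3 := by
  unfold expP; split <;> push_cast <;> ring

lemma zpow_shift (w : ℂ) (hw : w ≠ 0) (t : ℤ) : w ^ t = w^6 * w^(t-6) := by
  rw [← zpow_natCast w 6, ← zpow_add₀ hw]
  congr 1; push_cast; ring

lemma blockmul (hu : ∀ i, u i ≠ 0) (hlast : u (2*m+3) = aC * u (2*m+2)) :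
    fromBlocks (L1 m u) (L2 m u) 0 1 *
      fromBlocks (P11 m u) (P12 m u) (P21 m u) (P22 m u)
      = fromBlocks (Xmat m u) 0 (P21 m u) (P22 m u) := by
  have hA : L1 m u * P11 m u + L2 m u * P21 m u = Xmat m u := by
    ext k ν
    have h := rowop m u (u ν) k
    simpa [Matrix.mul_apply, Matrix.add_apply, P11, P21, Xmat] using h
  have hB : L1 m u * P12 m u + L2 m u * P22 m u = 0 := by
    ext k i
    have h := rowop m u (u (2*m+2+(i:ℕ))) k
    have hw : u (2*m+2+(i:ℕ)) ≠ 0 := hu _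
    have h6 : (u (2*m+2+(i:ℕ)))^6 = (u (2*m+2))^6 := by
      fin_cases i
      · norm_num
      · show (u (2*m+2+1))^6 = _
        rw [show 2*m+2+1 = 2*m+3 from rfl, hlast, mul_pow, aC_six, one_mul]
    have hz : u (2*m+2+(i:ℕ)) ^ expP (m+2) (k:ℕ)
        - (u (2*m+2))^6 * u (2*m+2+(i:ℕ)) ^ expP (m+2) ((k:ℕ)+2) = 0 := by
      rw [expP_add_two, zpow_shift _ hw (expP (m+2) (k:ℕ)), h6]; ring
    have hfin : (L1 m u * P12 m u + L2 m u * P22 m u) k i = 0 := by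
      simp only [Matrix.mul_apply, Matrix.add_apply, P12, P22, of_apply]
      rw [h, hz]
    simpa using hfin
  rw [fromBlocks_multiply, hA, hB]
  simp

lemma main_blocks_det (hu : ∀ i, u i ≠ 0) (hlast : u (2*m+3) = aC * u (2*m+2)) :
    (Matrix.of fun k ν : Fin (2*m+4) => u (ν:ℕ) ^ expP (m+2) (k:ℕ)).det
      = (Xmat m u).det * (P22 m u).det := by
  rw [split_det]
  have h := congrArg Matrix.det (blockmul m u hu hlast)
  rw [Matrix.det_mul, detL, one_mul] at h
  rw [h, det_fromBlocks_zero₁₂]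

lemma detX (hu : ∀ i, u i ≠ 0) : (Xmat m u).det
    = (∏ ν : Fin (2*m+2), (((u ν)^6 - (u (2*m+2))^6) * (u ν) ^ (-3:ℤ)))
      * (Matrix.of fun k ν : Fin (2*m+2) => u (ν:ℕ) ^ expP (m+1) (k:ℕ)).det := by
  have hXeq : Xmat m u = Matrix.of (fun k ν : Fin (2*m+2) =>
      ((((u ν)^6 - (u (2*m+2))^6) * (u ν) ^ (-3:ℤ))) * (u ν ^ expP (m+1) (k:ℕ))) := by
    ext k ν
    simp only [Xmat, of_apply]
    rw [expP_add_two, expP_sub]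
    have hw := hu ν
    have h1 : u ν ^ (expP (m+1) (k:ℕ) + 3)
        = u ν ^ expP (m+1) (k:ℕ) * u ν ^ (3:ℤ) := zpow_add₀ hw _ _
    have h2 : u ν ^ (expP (m+1) (k:ℕ) + 3 - 6)
        = u ν ^ expP (m+1) (k:ℕ) * u ν ^ (-3:ℤ) := by
      rw [show expP (m+1) (k:ℕ) + 3 - 6 = expP (m+1) (k:ℕ) + (-3) by ring, zpow_add₀ hw]
    rw [h1, h2]
    have h6 : u ν ^ (6:ℕ) * u ν ^ (-3:ℤ) = u ν ^ (3:ℤ) := by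
      rw [← zpow_natCast (u ν) 6, ← zpow_add₀ hw]; norm_num
    linear_combination (- (u ν ^ expP (m+1) (k:ℕ))) * h6
  rw [hXeq]
  exact det_mul_row _ _

lemma c_sig (w U : ℂ) (hw : w ≠ 0) (hU : U ≠ 0) :
    (w^6 - U^6) * w^(-3:ℤ) = U^3 * sig (w^3 * U^(-3:ℤ)) := by
  have h3 : ∀ (y:ℂ), y^(-3:ℤ) = (y^3)⁻¹ := fun y => by
    rw [_root_.zpow_neg, show ((3:ℤ)) = ((3:ℕ):ℤ) by norm_num, zpow_natCast]
  rw [sig, h3, h3]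
  have hw3 : w^3 ≠ 0 := pow_ne_zero _ hw
  have hU3 : U^3 ≠ 0 := pow_ne_zero _ hU
  field_simp

lemma detP22 (hlast : u (2*m+3) = aC * u (2*m+2)) : (P22 m u).det
    = (-1)^(m+2) * sig aC
      * ((u (2*m+2)) ^ (-3*(m:ℤ)-2) * (u (2*m+2)) ^ (-3*(m:ℤ)-4)) := by
  have e1 : expP (m+2) (2*m+2) = -3*(m:ℤ)-2 := by
    unfold expP; rw [show (2*m+2)%2 = 0 by omega]; push_cast; ring_nf
  have e2 : expP (m+2) (2*m+3) = -3*(m:ℤ)-4 := by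
    unfold expP; rw [show (2*m+3)%2 = 1 by omega]; push_cast; ring_nf
  have haC : aC ^ (-3*(m:ℤ)-4) - aC ^ (-3*(m:ℤ)-2) = (-1)^(m+2) * sig aC := by
    have hc : aC ^ ((3:ℤ)) = -1 := by
      rw [show ((3:ℤ))=((3:ℕ):ℤ) by norm_num, zpow_natCast, aC_cube]
    have hm : aC ^ ((-3:ℤ)*((m:ℤ)+1)) = (-1:ℂ)^(m+1) := by
      rw [show (-3:ℤ)*((m:ℤ)+1) = 3 * (-((m:ℤ)+1)) by ring, _root_.zpow_mul, hc,
        _root_.zpow_neg, show ((m:ℤ)+1) = ((m+1:ℕ):ℤ) by push_cast; ring, zpow_natCast,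
        ← inv_pow, inv_neg, inv_one]
    rw [show (-3*(m:ℤ)-4) = (-3:ℤ)*((m:ℤ)+1) + (-1) by ring,
      show (-3*(m:ℤ)-2) = (-3:ℤ)*((m:ℤ)+1) + 1 by ring,
      zpow_add₀ aC_ne, zpow_add₀ aC_ne, hm, _root_.zpow_neg_one, zpow_one, sig, pow_succ]
    ring
  rw [Matrix.det_fin_two]
  simp only [P22, of_apply, Fin.val_zero, Fin.val_one]
  rw [show 2*m+2+0 = 2*m+2 by ring, show 2*m+2+1 = 2*m+3 from rfl, e1, e2, hlast,
    mul_zpow, mul_zpow]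
  linear_combination ((u (2*m+2)) ^ (-3*(m:ℤ)-2) * (u (2*m+2)) ^ (-3*(m:ℤ)-4)) * haC

end

theorem stmt_8 (n : ℕ) (hn : 2 ≤ n) (u : ℕ → ℂ) (hu : ∀ i, u i ≠ 0)
    (hlast : u (2 * n - 1) = aC * u (2 * n - 2)) :
    Matrix.det (Matrix.of fun k ν : Fin (2 * n) => u (ν : ℕ) ^ expP n (k : ℕ))
      = (-1) ^ n * sig aC
          * (∏ μ ∈ Finset.range (2 * n - 2), sig (u μ ^ 3 * (u (2 * n - 2)) ^ (-3 : ℤ)))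
          * Matrix.det (Matrix.of fun k ν : Fin (2 * (n - 1)) =>
              u (ν : ℕ) ^ expP (n - 1) (k : ℕ)) := by
  obtain ⟨m, rfl⟩ : ∃ m, n = m + 2 := ⟨n - 2, by omega⟩
  have hU : u (2*m+2) ≠ 0 := hu _
  have hlast' : u (2*m+3) = aC * u (2*m+2) := hlast
  show (Matrix.of fun k ν : Fin (2*m+4) => u (ν:ℕ) ^ expP (m+2) (k:ℕ)).det
      = (-1)^(m+2) * sig aC
        * (∏ μ ∈ Finset.range (2*m+2), sig (u μ ^ 3 * (u (2*m+2)) ^ (-3:ℤ)))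
        * (Matrix.of fun k ν : Fin (2*m+2) => u (ν:ℕ) ^ expP (m+1) (k:ℕ)).det
  rw [main_blocks_det m u hu hlast', detX m u hu, detP22 m u hlast']
  have hprod : (∏ ν : Fin (2*m+2), (((u ν)^6 - (u (2*m+2))^6) * (u ν) ^ (-3:ℤ)))
      = (u (2*m+2))^(3*(2*m+2))
        * ∏ μ ∈ Finset.range (2*m+2), sig (u μ ^ 3 * (u (2*m+2)) ^ (-3:ℤ)) := by
    have step : ∀ ν : Fin (2*m+2), ((u ν)^6 - (u (2*m+2))^6) * (u ν) ^ (-3:ℤ)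
        = (u (2*m+2))^3 * sig ((u ν)^3 * (u (2*m+2))^(-3:ℤ)) :=
      fun ν => c_sig (u ν) (u (2*m+2)) (hu _) hU
    rw [Finset.prod_congr rfl (fun ν _ => step ν), Finset.prod_mul_distrib,
      Finset.prod_const, Finset.card_univ, Fintype.card_fin, ← pow_mul,
      Fin.prod_univ_eq_prod_range (fun ν => sig ((u ν)^3 * (u (2*m+2))^(-3:ℤ)))]
  rw [hprod]
  have hUU : (u (2*m+2))^(3*(2*m+2))
      * ((u (2*m+2)) ^ (-3*(m:ℤ)-2) * (u (2*m+2)) ^ (-3*(m:ℤ)-4)) = 1 := by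
    rw [← zpow_natCast (u (2*m+2)) (3*(2*m+2)), ← zpow_add₀ hU, ← zpow_add₀ hU,
      show ((3*(2*m+2):ℕ):ℤ) + (-3*(m:ℤ)-2 + (-3*(m:ℤ)-4)) = 0 by push_cast; ring]
    exact zpow_zero _
  linear_combination ((-1)^(m+2) * sig aC
    * (∏ μ ∈ Finset.range (2*m+2), sig (u μ ^ 3 * (u (2*m+2)) ^ (-3:ℤ)))
    * (Matrix.of fun k ν : Fin (2*m+2) => u (ν:ℕ) ^ expP (m+1) (k:ℕ)).det) * hUU
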